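/- arXiv:1807.09633 — 2 statements merged into one kernel-verified Lean document; each statement's English description precedes it below -/
import Mathlib

section
/- If U ~ Beta(a,b) and V ~ Beta(a+b,c) are independent, then the product UV has distribution Beta(a, b+c). -/
open MeasureTheory ProbabilityTheory Set

/-- The density of the Beta(a,b) distribution on (0,1). -/
noncomputable def betaPDF (a b x : ℝ) : ENNReal :=
  if x ∈ Set.Ioo (0 : ℝ) 1 then
    ENNReal.ofReal (Real.Gamma (a + b) / (Real.Gamma a * Real.Gamma b)
      * x ^ (a - 1) * (1 - x) ^ (b - 1))
  else 0

/-- The Beta(a,b) distribution on ℝ. -/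
noncomputable def betaMeasure (a b : ℝ) : Measure ℝ :=
  MeasureTheory.volume.withDensity (_root_.betaPDF a b)

lemma integral_beta_real {p q : ℝ} (hp : 0 < p) (hq : 0 < q) :
    ∫ t in (0:ℝ)..1, t ^ (p-1) * (1-t) ^ (q-1)
      = Real.Gamma p * Real.Gamma q / Real.Gamma (p+q) := by
  have key := Complex.Gamma_mul_Gamma_eq_betaIntegral (s := (p:ℂ)) (t := (q:ℂ))
    (by simpa using hp) (by simpa using hq)
  have hbeta : Complex.betaIntegral p q
      = ((∫ t in (0:ℝ)..1, t ^ (p-1) * (1-t) ^ (q-1) : ℝ) : ℂ) := by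
    rw [Complex.betaIntegral, ← intervalIntegral.integral_ofReal]
    apply intervalIntegral.integral_congr
    intro t ht
    rw [Set.uIcc_of_le (by norm_num : (0:ℝ) ≤ 1)] at ht
    simp only [show ((p:ℂ) - 1) = ((p-1 : ℝ) : ℂ) by push_cast; ring,
      show ((q:ℂ) - 1) = ((q-1 : ℝ) : ℂ) by push_cast; ring,
      show ((1:ℂ) - (t:ℝ)) = ((1 - t : ℝ) : ℂ) by push_cast; ring,
      ← Complex.ofReal_cpow ht.1, ← Complex.ofReal_cpow (show (0:ℝ) ≤ 1 - t by linarith [ht.2]),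
      ← Complex.ofReal_mul]
  rw [hbeta, show ((p:ℂ) + (q:ℂ)) = ((p+q : ℝ) : ℂ) by push_cast; ring,
    Complex.Gamma_ofReal, Complex.Gamma_ofReal, Complex.Gamma_ofReal,
    ← Complex.ofReal_mul, ← Complex.ofReal_mul] at key
  have h2 := Complex.ofReal_injective key
  have hΓ : Real.Gamma (p+q) ≠ 0 := (Real.Gamma_pos_of_pos (by linarith)).ne'
  rw [eq_div_iff hΓ, mul_comm]
  exact h2.symm

lemma lintegral_beta_real {p q : ℝ} (hp : 0 < p) (hq : 0 < q) :
    ∫⁻ t in Set.Ioo (0:ℝ) 1, ENNReal.ofReal (t ^ (p-1) * (1-t) ^ (q-1))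
      = ENNReal.ofReal (Real.Gamma p * Real.Gamma q / Real.Gamma (p+q)) := by
  have hint : IntegrableOn (fun t : ℝ => t ^ (p-1) * (1-t) ^ (q-1)) (Set.Ioc 0 1) := by
    have h := (Complex.betaIntegral_convergent (u := (p:ℂ)) (v := (q:ℂ))
      (by simpa using hp) (by simpa using hq)).1
    have h2 : IntegrableOn (fun x : ℝ => ((x:ℂ) ^ ((p:ℂ)-1) * (1-(x:ℂ)) ^ ((q:ℂ)-1)).re)
        (Set.Ioc 0 1) := h.re
    apply h2.congr_fun ?_ measurableSet_Ioc
    intro t ht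
    simp only [show ((p:ℂ) - 1) = ((p-1 : ℝ) : ℂ) by push_cast; ring,
      show ((q:ℂ) - 1) = ((q-1 : ℝ) : ℂ) by push_cast; ring,
      show ((1:ℂ) - (t:ℝ)) = ((1 - t : ℝ) : ℂ) by push_cast; ring,
      ← Complex.ofReal_cpow ht.1.le,
      ← Complex.ofReal_cpow (show (0:ℝ) ≤ 1 - t by linarith [ht.2]),
      ← Complex.ofReal_mul, Complex.ofReal_re]
  have hnn : 0 ≤ᶠ[ae (volume.restrict (Set.Ioc (0:ℝ) 1))]
      fun t : ℝ => t ^ (p-1) * (1-t) ^ (q-1) := by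
    filter_upwards [ae_restrict_mem measurableSet_Ioc] with t ht
    exact mul_nonneg (Real.rpow_nonneg ht.1.le _) (Real.rpow_nonneg (by linarith [ht.2]) _)
  rw [setLIntegral_congr Ioo_ae_eq_Ioc, ← ofReal_integral_eq_lintegral_ofReal hint hnn]
  congr 1
  rw [← integral_beta_real hp hq, intervalIntegral.integral_of_le (by norm_num)]

lemma lintegral_image_eq_lintegral_abs_deriv_mul' {s : Set ℝ} {f f' : ℝ → ℝ}
    (hs : MeasurableSet s) (hf' : ∀ x ∈ s, HasDerivWithinAt f (f' x) s x)
    (hf : Set.InjOn f s) (g : ℝ → ENNReal) :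
    ∫⁻ x in f '' s, g x = ∫⁻ x in s, ENNReal.ofReal |f' x| * g (f x) := by
  simpa only [ContinuousLinearMap.det_toSpanSingleton] using
    lintegral_image_eq_lintegral_abs_det_fderiv_mul volume hs
      (fun x hx => (hf' x hx).hasFDerivWithinAt) hf g

lemma betaPDF_measurable (a b : ℝ) : Measurable (_root_.betaPDF a b) := by
  unfold _root_.betaPDF
  refine Measurable.ite measurableSet_Ioo ?_ measurable_const
  apply Measurable.ennreal_ofReal
  fun_prop

lemma betaPDF_ne_top (a b x : ℝ) : _root_.betaPDF a b x ≠ ⊤ := by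
  unfold _root_.betaPDF
  split <;> simp [ENNReal.ofReal_ne_top]

/-- The key density convolution identity. -/
lemma beta_conv {a b c : ℝ} (ha : 0 < a) (hb : 0 < b) (hc : 0 < c) (z : ℝ) :
    ∫⁻ x, _root_.betaPDF a b x * (ENNReal.ofReal |x⁻¹| * _root_.betaPDF (a+b) c (x⁻¹ * z))
      = _root_.betaPDF a (b+c) z := by
  have hΓa := Real.Gamma_pos_of_pos ha
  have hΓb := Real.Gamma_pos_of_pos hb
  have hΓc := Real.Gamma_pos_of_pos hc
  have hΓab := Real.Gamma_pos_of_pos (show (0:ℝ) < a + b by linarith)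
  have hΓbc := Real.Gamma_pos_of_pos (show (0:ℝ) < b + c by linarith)
  have hΓabc := Real.Gamma_pos_of_pos (show (0:ℝ) < a + b + c by linarith)
  by_cases hz : z ∈ Set.Ioo (0:ℝ) 1
  swap
  · -- z outside (0,1): both sides vanish
    rw [_root_.betaPDF, if_neg hz]
    rw [← lintegral_zero]
    apply lintegral_congr
    intro x
    by_cases hx : x ∈ Set.Ioo (0:ℝ) 1
    · have hx0 : 0 < x := hx.1
      have : _root_.betaPDF (a+b) c (x⁻¹ * z) = 0 := by
        rw [_root_.betaPDF, if_neg]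
        intro hmem
        rcases lt_or_ge z 0 with h | h
        · have : x⁻¹ * z < 0 := mul_neg_of_pos_of_neg (inv_pos.mpr hx0) h
          linarith [hmem.1]
        · rcases eq_or_lt_of_le h with h0 | hzpos
          · rw [← h0] at hmem; simp at hmem
          · have hz1 : 1 ≤ z := by
              by_contra hcon
              exact hz ⟨hzpos, lt_of_not_ge hcon⟩
            have : 1 < x⁻¹ * z := by
              have h1 : 1 < x⁻¹ := (one_lt_inv₀ hx0).mpr hx.2
              nlinarith
            linarith [hmem.2]
      rw [this, mul_zero, mul_zero]
    · rw [_root_.betaPDF, if_neg hx, zero_mul]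
  · -- z ∈ (0,1): the main computation
    obtain ⟨hz0, hz1⟩ := hz
    -- the substitution map
    set φ : ℝ → ℝ := fun t => z / (1 - (1-z)*t) with hφ
    have hwpos : ∀ t ∈ Set.Ioo (0:ℝ) 1, 0 < 1 - (1-z)*t := by
      intro t ht
      nlinarith [ht.1, ht.2]
    have hwz : ∀ t ∈ Set.Ioo (0:ℝ) 1, z < 1 - (1-z)*t := by
      intro t ht
      nlinarith [ht.1, ht.2]
    have hw1 : ∀ t ∈ Set.Ioo (0:ℝ) 1, 1 - (1-z)*t < 1 := by
      intro t ht
      nlinarith [ht.1, ht.2]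
    have hderiv : ∀ t ∈ Set.Ioo (0:ℝ) 1,
        HasDerivWithinAt φ (z*(1-z) / (1 - (1-z)*t)^2) (Set.Ioo 0 1) t := by
      intro t ht
      have hw : HasDerivAt (fun t : ℝ => 1 - (1-z)*t) (-(1-z)) t := by
        simpa using ((hasDerivAt_id t).const_mul (1-z)).const_sub 1
      have hne : 1 - (1-z)*t ≠ 0 := (hwpos t ht).ne'
      have := (hasDerivAt_const t z).div hw hne
      have heq : (0 * (1 - (1-z)*t) - z * -(1-z)) / (1 - (1-z)*t)^2
          = z*(1-z) / (1 - (1-z)*t)^2 := by ring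
      rw [heq] at this
      exact this.hasDerivWithinAt
    have hinj : Set.InjOn φ (Set.Ioo 0 1) := by
      intro t1 h1 t2 h2 heq
      have hn1 : 1 - (1-z)*t1 ≠ 0 := (hwpos t1 h1).ne'
      have hn2 : 1 - (1-z)*t2 ≠ 0 := (hwpos t2 h2).ne'
      have hz' : z ≠ 0 := hz0.ne'
      simp only [hφ] at heq
      field_simp at heq
      have h1z : (1:ℝ) - z ≠ 0 := by
        have := hz1; intro hcon; nlinarith
      have h3 : (1 - z) * t1 = (1 - z) * t2 := by linarith [heq]
      exact mul_left_cancel₀ h1z h3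
    have himg : φ '' Set.Ioo 0 1 = Set.Ioo z 1 := by
      ext x
      constructor
      · rintro ⟨t, ht, rfl⟩
        have hw0 := hwpos t ht
        constructor
        · rw [hφ]
          rw [lt_div_iff₀ hw0]
          nlinarith [hw1 t ht]
        · rw [hφ, div_lt_one hw0]
          exact hwz t ht
      · intro hx
        have hx0 : 0 < x := lt_trans hz0 hx.1
        have h1z : (0:ℝ) < 1 - z := by linarith
        refine ⟨(x - z)/(x*(1-z)), ⟨?_, ?_⟩, ?_⟩
        · apply div_pos (by linarith [hx.1]) (by positivity)
        · rw [div_lt_one (by positivity)]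
          nlinarith [hx.2]
        · have hden : 1 - (1-z)*((x-z)/(x*(1-z))) = z/x := by
            field_simp
            ring
          show z / (1 - (1-z)*((x-z)/(x*(1-z)))) = x
          rw [hden, div_div_eq_mul_div, mul_comm, mul_div_assoc, div_self hz0.ne', mul_one]
    -- rewrite integrand as indicator over Ioo z 1
    have hpoint : ∀ x : ℝ,
        _root_.betaPDF a b x * (ENNReal.ofReal |x⁻¹| * _root_.betaPDF (a+b) c (x⁻¹ * z))
          = (Set.Ioo z 1).indicator (fun x => ENNReal.ofReal
              (Real.Gamma (a + b) / (Real.Gamma a * Real.Gamma b) * x ^ (a - 1) * (1 - x) ^ (b - 1)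
               * (x⁻¹ * (Real.Gamma (a + b + c) / (Real.Gamma (a + b) * Real.Gamma c)
                  * (x⁻¹ * z) ^ (a + b - 1) * (1 - x⁻¹ * z) ^ (c - 1))))) x := by
      intro x
      by_cases hx : x ∈ Set.Ioo z 1
      · have hx01 : x ∈ Set.Ioo (0:ℝ) 1 := ⟨lt_trans hz0 hx.1, hx.2⟩
        have hx0 : 0 < x := hx01.1
        have hinv : x⁻¹ * z ∈ Set.Ioo (0:ℝ) 1 := by
          constructor
          · positivity
          · rw [inv_mul_lt_iff₀ hx0, mul_one]
            exact hx.1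
        rw [Set.indicator_of_mem hx, _root_.betaPDF, if_pos hx01, _root_.betaPDF, if_pos hinv,
          abs_of_pos (inv_pos.mpr hx0),
          ← ENNReal.ofReal_mul (le_of_lt (inv_pos.mpr hx0)),
          ← ENNReal.ofReal_mul (mul_nonneg (mul_nonneg
            (div_nonneg hΓab.le (mul_nonneg hΓa.le hΓb.le)) (Real.rpow_nonneg hx0.le _))
            (Real.rpow_nonneg (by linarith [hx.2] : (0:ℝ) ≤ 1 - x) _))]
      · rw [Set.indicator_of_notMem hx]
        by_cases hx01 : x ∈ Set.Ioo (0:ℝ) 1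
        · have hx0 : 0 < x := hx01.1
          have hxez : x ≤ z := by
            by_contra hcon
            exact hx ⟨lt_of_not_ge hcon, hx01.2⟩
          have : _root_.betaPDF (a+b) c (x⁻¹ * z) = 0 := by
            rw [_root_.betaPDF, if_neg]
            intro hmem
            have : (1:ℝ) ≤ x⁻¹ * z := by
              rw [← inv_mul_cancel₀ hx0.ne']
              apply mul_le_mul_of_nonneg_left hxez (by positivity)
            linarith [hmem.2]
          rw [this, mul_zero, mul_zero]
        · rw [_root_.betaPDF, if_neg hx01, zero_mul]
    rw [lintegral_congr hpoint, lintegral_indicator measurableSet_Ioo, ← himg,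
      lintegral_image_eq_lintegral_abs_deriv_mul' measurableSet_Ioo hderiv hinj]
    -- pointwise simplification on (0,1)
    have hpoint2 : ∀ t ∈ Set.Ioo (0:ℝ) 1,
        ENNReal.ofReal |z*(1-z) / (1 - (1-z)*t)^2| * ENNReal.ofReal
          (Real.Gamma (a + b) / (Real.Gamma a * Real.Gamma b) * (φ t) ^ (a - 1)
            * (1 - φ t) ^ (b - 1)
            * ((φ t)⁻¹ * (Real.Gamma (a + b + c) / (Real.Gamma (a + b) * Real.Gamma c)
               * ((φ t)⁻¹ * z) ^ (a + b - 1) * (1 - (φ t)⁻¹ * z) ^ (c - 1))))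
        = ENNReal.ofReal (Real.Gamma (a + b) / (Real.Gamma a * Real.Gamma b)
            * (Real.Gamma (a + b + c) / (Real.Gamma (a + b) * Real.Gamma c))
            * z ^ (a-1) * (1-z) ^ (b+c-1) * (t ^ (c-1) * (1-t) ^ (b-1))) := by
      intro t ht
      have hw0 := hwpos t ht
      have hwz' := hwz t ht
      have hw1' := hw1 t ht
      have ht0 : 0 < t := ht.1
      have ht1 : 0 < 1 - t := by linarith [ht.2]
      have h1z : (0:ℝ) < 1 - z := by linarith
      set w : ℝ := 1 - (1-z)*t with hwdef
      have hφt : φ t = z / w := rfl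
      have habs : |z*(1-z) / w^2| = z*(1-z)/w^2 := abs_of_pos (by positivity)
      rw [habs, ← ENNReal.ofReal_mul (by positivity)]
      congr 1
      have e1 : (φ t)⁻¹ = w / z := by rw [hφt, inv_div]
      have e2 : (φ t)⁻¹ * z = w := by rw [e1, div_mul_cancel₀ _ hz0.ne']
      have e3 : 1 - (φ t)⁻¹ * z = (1-z)*t := by rw [e2, hwdef]; ring
      have e4 : 1 - φ t = (1-z)*(1-t)/w := by
        rw [hφt]
        field_simp
        ring
      rw [e3, e2, e4, e1, hφt,
        Real.div_rpow hz0.le hw0.le,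
        Real.div_rpow (by positivity) hw0.le,
        Real.mul_rpow h1z.le ht1.le,
        Real.mul_rpow h1z.le ht0.le,
        show a + b - 1 = (a-1) + (b-1) + 1 by ring,
        Real.rpow_add hw0, Real.rpow_add hw0, Real.rpow_one,
        show b + c - 1 = (b-1) + (c-1) + 1 by ring,
        Real.rpow_add h1z, Real.rpow_add h1z, Real.rpow_one]
      have hb1 : (0:ℝ) < w ^ (b-1) := Real.rpow_pos_of_pos hw0 _
      have ha1 : (0:ℝ) < w ^ (a-1) := Real.rpow_pos_of_pos hw0 _
      field_simp [hw0.ne', hz0.ne', ha1.ne', hb1.ne', hΓa.ne', hΓb.ne', hΓc.ne',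
        hΓab.ne', hΓabc.ne']
    rw [setLIntegral_congr_fun measurableSet_Ioo hpoint2]
    rw [show (fun t => ENNReal.ofReal (Real.Gamma (a + b) / (Real.Gamma a * Real.Gamma b)
            * (Real.Gamma (a + b + c) / (Real.Gamma (a + b) * Real.Gamma c))
            * z ^ (a-1) * (1-z) ^ (b+c-1) * (t ^ (c-1) * (1-t) ^ (b-1))))
        = (fun t => ENNReal.ofReal (Real.Gamma (a + b) / (Real.Gamma a * Real.Gamma b)
            * (Real.Gamma (a + b + c) / (Real.Gamma (a + b) * Real.Gamma c))
            * z ^ (a-1) * (1-z) ^ (b+c-1)) * ENNReal.ofReal (t ^ (c-1) * (1-t) ^ (b-1)))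
      from funext fun t => ENNReal.ofReal_mul (mul_nonneg (mul_nonneg (mul_nonneg
        (div_nonneg hΓab.le (mul_nonneg hΓa.le hΓb.le))
        (div_nonneg hΓabc.le (mul_nonneg hΓab.le hΓc.le)))
        (Real.rpow_nonneg hz0.le _))
        (Real.rpow_nonneg (by linarith : (0:ℝ) ≤ 1 - z) _))]
    rw [lintegral_const_mul' _ _ ENNReal.ofReal_ne_top, lintegral_beta_real hc hb,
      ← ENNReal.ofReal_mul (mul_nonneg (mul_nonneg (mul_nonneg
        (div_nonneg hΓab.le (mul_nonneg hΓa.le hΓb.le))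
        (div_nonneg hΓabc.le (mul_nonneg hΓab.le hΓc.le)))
        (Real.rpow_nonneg hz0.le _))
        (Real.rpow_nonneg (by linarith : (0:ℝ) ≤ 1 - z) _)),
      _root_.betaPDF, if_pos (Set.mem_Ioo.mpr ⟨hz0, hz1⟩)]
    congr 1
    have hΓcb : Real.Gamma (c + b) = Real.Gamma (b + c) := by rw [add_comm]
    have habc : Real.Gamma (a + (b + c)) = Real.Gamma (a + b + c) := by rw [add_assoc]
    rw [hΓcb, habc]
    field_simp [hΓa.ne', hΓb.ne', hΓc.ne', hΓab.ne', hΓbc.ne', hΓabc.ne']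

/-- If `U ~ Beta(a,b)` and `V ~ Beta(a+b,c)` are independent, then `UV ~ Beta(a, b+c)`. -/
theorem beta_mul_beta {Ω : Type*} [MeasurableSpace Ω] (P : Measure Ω) [IsProbabilityMeasure P]
    (a b c : ℝ) (ha : 0 < a) (hb : 0 < b) (hc : 0 < c)
    (U V : Ω → ℝ) (hU : Measurable U) (hV : Measurable V)
    (hindep : IndepFun U V P)
    (hU_dist : P.map U = _root_.betaMeasure a b) (hV_dist : P.map V = _root_.betaMeasure (a + b) c) :
    P.map (fun ω => U ω * V ω) = _root_.betaMeasure a (b + c) := by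
  haveI hPU : IsProbabilityMeasure (_root_.betaMeasure a b) :=
    hU_dist ▸ Measure.isProbabilityMeasure_map hU.aemeasurable
  haveI hPV : IsProbabilityMeasure (_root_.betaMeasure (a + b) c) :=
    hV_dist ▸ Measure.isProbabilityMeasure_map hV.aemeasurable
  have hm : Measurable (fun p : ℝ × ℝ => p.1 * p.2) := measurable_fst.mul measurable_snd
  have hmap : P.map (fun ω => U ω * V ω)
      = Measure.map (fun p : ℝ × ℝ => p.1 * p.2)
        ((_root_.betaMeasure a b).prod (_root_.betaMeasure (a + b) c)) := by
    rw [← hU_dist, ← hV_dist,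
      ← (indepFun_iff_map_prod_eq_prod_map_map hU.aemeasurable hV.aemeasurable).mp hindep,
      Measure.map_map hm (hU.prodMk hV)]
    rfl
  rw [hmap]
  have hf : Measurable (_root_.betaPDF a b) := betaPDF_measurable a b
  have hg : Measurable (_root_.betaPDF (a+b) c) := betaPDF_measurable (a+b) c
  apply Measure.ext
  intro s hs
  have hind : Measurable (s.indicator (1 : ℝ → ENNReal)) := measurable_one.indicator hs
  have hindne : ∀ z' : ℝ, s.indicator (1 : ℝ → ENNReal) z' ≠ ⊤ := by
    intro z'; by_cases h : z' ∈ s <;> simp [h]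
  calc Measure.map (fun p : ℝ × ℝ => p.1 * p.2)
        ((_root_.betaMeasure a b).prod (_root_.betaMeasure (a + b) c)) s
      = ((_root_.betaMeasure a b).prod (_root_.betaMeasure (a + b) c))
          ((fun p : ℝ × ℝ => p.1 * p.2) ⁻¹' s) := Measure.map_apply hm hs
    _ = ∫⁻ p, s.indicator 1 (p.1 * p.2)
          ∂((_root_.betaMeasure a b).prod (_root_.betaMeasure (a + b) c)) := by
        rw [← lintegral_indicator_one (hm hs)]
        apply lintegral_congr
        intro p
        by_cases hp : p.1 * p.2 ∈ s
        · rw [Set.indicator_of_mem hp, Set.indicator_of_mem (by exact hp)]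
          rfl
        · rw [Set.indicator_of_notMem hp, Set.indicator_of_notMem (by exact hp)]
    _ = ∫⁻ x, ∫⁻ y, s.indicator 1 (x * y) ∂(_root_.betaMeasure (a+b) c) ∂(_root_.betaMeasure a b) :=
        lintegral_prod _ ((hind.comp hm).aemeasurable)
    _ = ∫⁻ x, (∫⁻ y, _root_.betaPDF (a+b) c y * s.indicator 1 (x * y)) ∂(_root_.betaMeasure a b) := by
        apply lintegral_congr
        intro x
        rw [_root_.betaMeasure, lintegral_withDensity_eq_lintegral_mul volume hg
          (show Measurable fun y : ℝ => s.indicator 1 (x * y) from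
            hind.comp (measurable_const_mul x))]
        rfl
    _ = ∫⁻ x, _root_.betaPDF a b x * ∫⁻ y, _root_.betaPDF (a+b) c y * s.indicator 1 (x * y) := by
        have hΨ : Measurable fun x : ℝ => ∫⁻ y, _root_.betaPDF (a+b) c y * s.indicator 1 (x * y) := by
          apply Measurable.lintegral_prod_right
            (f := fun x y => _root_.betaPDF (a+b) c y * s.indicator 1 (x * y))
          exact (hg.comp measurable_snd).mul (hind.comp hm)
        rw [_root_.betaMeasure, lintegral_withDensity_eq_lintegral_mul volume hf hΨ]
        rfl
    _ = ∫⁻ x, _root_.betaPDF a b x * (ENNReal.ofReal |x⁻¹|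
          * ∫⁻ z', _root_.betaPDF (a+b) c (x⁻¹ * z') * s.indicator 1 z') := by
        apply lintegral_congr
        intro x
        by_cases hx : x ∈ Set.Ioo (0:ℝ) 1
        · have hx0 : x ≠ 0 := ne_of_gt hx.1
          congr 1
          have hH : Measurable fun z' => _root_.betaPDF (a+b) c (x⁻¹ * z') * s.indicator 1 z' :=
            (hg.comp (measurable_const_mul x⁻¹)).mul hind
          calc ∫⁻ y, _root_.betaPDF (a+b) c y * s.indicator 1 (x * y)
              = ∫⁻ y, (fun z' => _root_.betaPDF (a+b) c (x⁻¹ * z') * s.indicator 1 z') (x * y) := by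
                apply lintegral_congr
                intro y
                simp only [inv_mul_cancel_left₀ hx0]
            _ = ∫⁻ z', _root_.betaPDF (a+b) c (x⁻¹ * z') * s.indicator 1 z'
                  ∂(Measure.map (fun y => x * y) volume) :=
                (lintegral_map hH (measurable_const_mul x)).symm
            _ = ENNReal.ofReal |x⁻¹|
                  * ∫⁻ z', _root_.betaPDF (a+b) c (x⁻¹ * z') * s.indicator 1 z' := by
                rw [Real.map_volume_mul_left hx0, lintegral_smul_measure, smul_eq_mul]
        · rw [_root_.betaPDF, if_neg hx, zero_mul, zero_mul]
    _ = ∫⁻ x, ∫⁻ z', (_root_.betaPDF a b x * (ENNReal.ofReal |x⁻¹| * _root_.betaPDF (a+b) c (x⁻¹ * z')))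
          * s.indicator 1 z' := by
        apply lintegral_congr
        intro x
        rw [← lintegral_const_mul' (ENNReal.ofReal |x⁻¹|) _ ENNReal.ofReal_ne_top,
          ← lintegral_const_mul' (_root_.betaPDF a b x) _ (betaPDF_ne_top a b x)]
        apply lintegral_congr
        intro z'
        ring
    _ = ∫⁻ z', ∫⁻ x, (_root_.betaPDF a b x * (ENNReal.ofReal |x⁻¹| * _root_.betaPDF (a+b) c (x⁻¹ * z')))
          * s.indicator 1 z' := by
        apply lintegral_lintegral_swap
        apply Measurable.aemeasurable
        exact (((hf.comp measurable_fst).mul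
          (((measurable_fst.inv.abs).ennreal_ofReal).mul
            (hg.comp (measurable_fst.inv.mul measurable_snd)))).mul
          (hind.comp measurable_snd))
    _ = ∫⁻ z', _root_.betaPDF a (b+c) z' * s.indicator 1 z' := by
        apply lintegral_congr
        intro z'
        rw [lintegral_mul_const' _ _ (hindne z'), beta_conv ha hb hc z']
    _ = ∫⁻ z', s.indicator (_root_.betaPDF a (b+c)) z' := by
        apply lintegral_congr
        intro z'
        by_cases h : z' ∈ s
        · rw [Set.indicator_of_mem h, Set.indicator_of_mem h, Pi.one_apply, mul_one]
        · rw [Set.indicator_of_notMem h, Set.indicator_of_notMem h, mul_zero]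
    _ = ∫⁻ z' in s, _root_.betaPDF a (b+c) z' := lintegral_indicator hs _
    _ = _root_.betaMeasure a (b+c) s := (withDensity_apply _ hs).symm
end

section
/- Let a, δ > 0, k ≥ 2 an integer, and let U_1,…,U_k be independent random variables with U_j ~ Beta(a + (j-1)δ, δ). Then the product U_1 ⋯ U_k has distribution Beta(a, kδ). -/
open MeasureTheory ProbabilityTheory

section BetaAux
open Real Set

lemma cpow_eq_aux {p q : ℝ} (x : ℝ) (hx : x ∈ Set.Icc (0:ℝ) 1) :
    (x:ℂ) ^ ((p:ℂ) - 1) * (1 - (x:ℂ)) ^ ((q:ℂ) - 1)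
      = ((x ^ (p - 1) * (1 - x) ^ (q - 1) : ℝ) : ℂ) := by
  obtain ⟨h0, h1⟩ := hx
  rw [Complex.ofReal_mul, Complex.ofReal_cpow h0, Complex.ofReal_cpow (by linarith)]
  push_cast
  ring

lemma realBetaIntegrable {p q : ℝ} (hp : 0 < p) (hq : 0 < q) :
    IntegrableOn (fun x : ℝ => x ^ (p - 1) * (1 - x) ^ (q - 1)) (Set.Ioo 0 1) := by
  have h := Complex.betaIntegral_convergent (u := (p : ℂ)) (v := (q : ℂ)) (by simpa) (by simpa)
  have h2 : IntervalIntegrable (fun x : ℝ => x ^ (p - 1) * (1 - x) ^ (q - 1)) volume 0 1 := by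
    have hcongr : Set.EqOn (fun x : ℝ => x ^ (p - 1) * (1 - x) ^ (q - 1))
        (fun x : ℝ => ‖(x:ℂ) ^ ((p:ℂ) - 1) * (1 - (x:ℂ)) ^ ((q:ℂ) - 1)‖)
        (Set.uIcc 0 1) := by
      intro x hx
      rw [Set.uIcc_of_le (by norm_num)] at hx
      simp only
      rw [cpow_eq_aux x hx, Complex.norm_real, Real.norm_eq_abs, abs_of_nonneg]
      exact mul_nonneg (Real.rpow_nonneg hx.1 _) (Real.rpow_nonneg (by linarith [hx.2]) _)
    refine h.norm.congr ?_
    intro x hx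
    have hx' : x ∈ Set.uIcc (0:ℝ) 1 := Set.uIoc_subset_uIcc hx
    exact (hcongr hx').symm
  exact (h2.1).mono_set Set.Ioo_subset_Ioc_self

lemma realBetaIntegral {p q : ℝ} (hp : 0 < p) (hq : 0 < q) :
    ∫ x in Set.Ioo (0:ℝ) 1, x ^ (p - 1) * (1 - x) ^ (q - 1)
      = Real.Gamma p * Real.Gamma q / Real.Gamma (p + q) := by
  have key : Complex.Gamma p * Complex.Gamma q
      = Complex.Gamma (p + q) * Complex.betaIntegral p q :=
    Complex.Gamma_mul_Gamma_eq_betaIntegral (by simpa) (by simpa)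
  have hbeta : Complex.betaIntegral p q
      = ((∫ x in (0:ℝ)..1, x ^ (p - 1) * (1 - x) ^ (q - 1) : ℝ) : ℂ) := by
    rw [Complex.betaIntegral]
    rw [← intervalIntegral.integral_ofReal]
    apply intervalIntegral.integral_congr
    intro x hx
    rw [Set.uIcc_of_le (by norm_num)] at hx
    exact cpow_eq_aux x hx
  have hIoo : ∫ x in Set.Ioo (0:ℝ) 1, x ^ (p - 1) * (1 - x) ^ (q - 1)
      = ∫ x in (0:ℝ)..1, x ^ (p - 1) * (1 - x) ^ (q - 1) := by
    rw [intervalIntegral.integral_of_le (by norm_num), ← integral_Ioc_eq_integral_Ioo]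
  rw [hIoo]
  have := key
  rw [hbeta, ← Complex.ofReal_add, Complex.Gamma_ofReal, Complex.Gamma_ofReal,
    Complex.Gamma_ofReal, ← Complex.ofReal_mul, ← Complex.ofReal_mul] at this
  have h3 : Real.Gamma p * Real.Gamma q
      = Real.Gamma (p + q) * ∫ x in (0:ℝ)..1, x ^ (p - 1) * (1 - x) ^ (q - 1) :=
    Complex.ofReal_injective this
  have hΓ : Real.Gamma (p + q) ≠ 0 := (Real.Gamma_pos_of_pos (by linarith)).ne'
  rw [h3]
  field_simp


/-- NNReal version of the density. -/
noncomputable def betaNN (a b x : ℝ) : NNReal :=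
  if x ∈ Set.Ioo (0 : ℝ) 1 then
    Real.toNNReal (Real.Gamma (a + b) / (Real.Gamma a * Real.Gamma b)
      * x ^ (a - 1) * (1 - x) ^ (b - 1))
  else 0

lemma betaPDF_eq_coe_betaNN (a b : ℝ) : _root_.betaPDF a b = fun x => ((betaNN a b x : NNReal) : ENNReal) := by
  funext x
  rw [_root_.betaPDF, betaNN]
  split <;> simp [ENNReal.ofReal]

lemma measurable_betaNN (a b : ℝ) : Measurable (betaNN a b) := by
  unfold betaNN
  apply Measurable.ite measurableSet_Ioo _ measurable_const
  apply Measurable.real_toNNReal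
  exact ((measurable_const.mul (measurable_id.pow_const _)).mul
    ((measurable_const.sub measurable_id).pow_const _))

lemma integral_betaMeasure {a b : ℝ} (ha : 0 < a) (hb : 0 < b) (g : ℝ → ℝ) :
    ∫ x, g x ∂(_root_.betaMeasure a b)
      = ∫ x in Set.Ioo (0:ℝ) 1, (Real.Gamma (a + b) / (Real.Gamma a * Real.Gamma b)
          * x ^ (a - 1) * (1 - x) ^ (b - 1)) * g x := by
  rw [_root_.betaMeasure, betaPDF_eq_coe_betaNN, integral_withDensity_eq_integral_smul (measurable_betaNN a b)]
  rw [← integral_indicator measurableSet_Ioo]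
  congr 1
  funext x
  rw [Set.indicator, betaNN]
  split
  · rename_i hx
    simp only [if_pos hx, NNReal.smul_def, smul_eq_mul]
    rw [Real.coe_toNNReal]
    have h1 : (0:ℝ) ≤ x ^ (a-1) := Real.rpow_nonneg hx.1.le _
    have h2 : (0:ℝ) ≤ (1-x) ^ (b-1) := Real.rpow_nonneg (by linarith [hx.2]) _
    have h3 : (0:ℝ) < Real.Gamma (a+b) / (Real.Gamma a * Real.Gamma b) :=
      div_pos (Real.Gamma_pos_of_pos (by linarith))
        (mul_pos (Real.Gamma_pos_of_pos ha) (Real.Gamma_pos_of_pos hb))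
    positivity
  · rename_i hx
    simp [if_neg hx]

lemma coe_betaNN_eq {a b : ℝ} (ha : 0 < a) (hb : 0 < b) :
    (fun x => ((betaNN a b x : ℝ)))
      = Set.indicator (Set.Ioo (0:ℝ) 1) (fun x => Real.Gamma (a + b) / (Real.Gamma a * Real.Gamma b)
          * x ^ (a - 1) * (1 - x) ^ (b - 1)) := by
  funext x
  rw [betaNN, Set.indicator]
  split
  · rename_i hx
    have h1 : (0:ℝ) ≤ x ^ (a-1) := Real.rpow_nonneg hx.1.le _
    have h2 : (0:ℝ) ≤ (1-x) ^ (b-1) := Real.rpow_nonneg (by linarith [hx.2]) _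
    have h3 : (0:ℝ) < Real.Gamma (a+b) / (Real.Gamma a * Real.Gamma b) :=
      div_pos (Real.Gamma_pos_of_pos (by linarith))
        (mul_pos (Real.Gamma_pos_of_pos ha) (Real.Gamma_pos_of_pos hb))
    rw [Real.coe_toNNReal]
    positivity
  · simp

lemma integrable_coe_betaNN {a b : ℝ} (ha : 0 < a) (hb : 0 < b) :
    Integrable (fun x => ((betaNN a b x : ℝ))) := by
  rw [coe_betaNN_eq ha hb]
  rw [integrable_indicator_iff measurableSet_Ioo]
  have : IntegrableOn (fun x : ℝ => x ^ (a - 1) * (1 - x) ^ (b - 1)) (Set.Ioo 0 1) :=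
    realBetaIntegrable ha hb
  have := this.const_mul (Real.Gamma (a + b) / (Real.Gamma a * Real.Gamma b))
  apply this.congr
  filter_upwards with x
  ring

lemma isProbabilityMeasure_betaMeasure {a b : ℝ} (ha : 0 < a) (hb : 0 < b) :
    IsProbabilityMeasure (_root_.betaMeasure a b) := by
  constructor
  rw [_root_.betaMeasure, withDensity_apply _ MeasurableSet.univ, Measure.restrict_univ,
    betaPDF_eq_coe_betaNN, lintegral_coe_eq_integral _ (integrable_coe_betaNN ha hb)]
  rw [coe_betaNN_eq ha hb, integral_indicator measurableSet_Ioo]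
  have : ∫ x in Set.Ioo (0:ℝ) 1, Real.Gamma (a + b) / (Real.Gamma a * Real.Gamma b)
      * x ^ (a - 1) * (1 - x) ^ (b - 1)
      = Real.Gamma (a + b) / (Real.Gamma a * Real.Gamma b)
        * ∫ x in Set.Ioo (0:ℝ) 1, x ^ (a - 1) * (1 - x) ^ (b - 1) := by
    rw [← MeasureTheory.integral_const_mul]
    congr 1; funext x; ring
  rw [this, realBetaIntegral ha hb]
  have h1 : Real.Gamma a ≠ 0 := (Real.Gamma_pos_of_pos ha).ne'
  have h2 : Real.Gamma b ≠ 0 := (Real.Gamma_pos_of_pos hb).ne'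
  have h3 : Real.Gamma (a+b) ≠ 0 := (Real.Gamma_pos_of_pos (by linarith)).ne'
  rw [show Real.Gamma (a + b) / (Real.Gamma a * Real.Gamma b)
      * (Real.Gamma a * Real.Gamma b / Real.Gamma (a + b)) = 1 by field_simp]
  simp

lemma moment_betaMeasure {a b : ℝ} (ha : 0 < a) (hb : 0 < b) (n : ℕ) :
    ∫ x, x ^ n ∂(_root_.betaMeasure a b)
      = Real.Gamma (a + n) * Real.Gamma (a + b) / (Real.Gamma a * Real.Gamma (a + b + n)) := by
  rw [integral_betaMeasure ha hb]
  have hcong : ∀ x ∈ Set.Ioo (0:ℝ) 1,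
      Real.Gamma (a + b) / (Real.Gamma a * Real.Gamma b) * x ^ (a - 1) * (1 - x) ^ (b - 1) * x ^ n
        = Real.Gamma (a + b) / (Real.Gamma a * Real.Gamma b)
          * (x ^ (a + n - 1) * (1 - x) ^ (b - 1)) := by
    intro x hx
    have hxpow : (x:ℝ) ^ n = x ^ ((n:ℝ)) := (Real.rpow_natCast x n).symm
    rw [hxpow, show a + (n:ℝ) - 1 = (a - 1) + n by ring, Real.rpow_add hx.1]
    ring
  rw [setIntegral_congr_fun measurableSet_Ioo hcong, MeasureTheory.integral_const_mul,
    realBetaIntegral (by positivity) hb]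
  have h1 : Real.Gamma a ≠ 0 := (Real.Gamma_pos_of_pos ha).ne'
  have h2 : Real.Gamma b ≠ 0 := (Real.Gamma_pos_of_pos hb).ne'
  have h3 : Real.Gamma (a+b) ≠ 0 := (Real.Gamma_pos_of_pos (by linarith)).ne'
  have h4 : Real.Gamma (a+b+n) ≠ 0 := (Real.Gamma_pos_of_pos (by positivity)).ne'
  rw [show a + (n:ℝ) + b = a + b + n by ring]
  field_simp

lemma betaMeasure_compl_Ioo (a b : ℝ) : _root_.betaMeasure a b (Set.Ioo (0:ℝ) 1)ᶜ = 0 := by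
  rw [_root_.betaMeasure, withDensity_apply _ (measurableSet_Ioo.compl)]
  have : ∀ᵐ x ∂(volume.restrict (Set.Ioo (0:ℝ) 1)ᶜ), _root_.betaPDF a b x = 0 := by
    filter_upwards [ae_restrict_mem measurableSet_Ioo.compl] with x hx
    rw [_root_.betaPDF, if_neg hx]
  rw [lintegral_congr_ae this]
  simp

section Uniq
variable {μ ν : Measure ℝ} [IsProbabilityMeasure μ] [IsProbabilityMeasure ν]

lemma integrable_pow_of_ae_Icc (hμ : ∀ᵐ x ∂μ, x ∈ Set.Icc (0:ℝ) 1) (n : ℕ) :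
    Integrable (fun x : ℝ => x ^ n) μ := by
  apply Integrable.mono' (integrable_const (1:ℝ))
    (continuous_pow n).aestronglyMeasurable
  filter_upwards [hμ] with x hx
  rw [Real.norm_eq_abs, abs_pow]
  exact pow_le_one₀ (abs_nonneg x) (abs_le.mpr ⟨by linarith [hx.1], hx.2⟩) 

lemma integral_poly_eq (hμ : ∀ᵐ x ∂μ, x ∈ Set.Icc (0:ℝ) 1)
    (hν : ∀ᵐ x ∂ν, x ∈ Set.Icc (0:ℝ) 1)
    (h : ∀ n : ℕ, ∫ x, x ^ n ∂μ = ∫ x, x ^ n ∂ν) (P : Polynomial ℝ) :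
    ∫ x, P.eval x ∂μ = ∫ x, P.eval x ∂ν := by
  have key : ∀ (ρ : Measure ℝ) (_ : IsProbabilityMeasure ρ) (_ : ∀ᵐ x ∂ρ, x ∈ Set.Icc (0:ℝ) 1),
      ∫ x, P.eval x ∂ρ = ∑ i ∈ Finset.range (P.natDegree + 1), P.coeff i * ∫ x, x ^ i ∂ρ := by
    intro ρ _ hρ
    have : ∀ x : ℝ, P.eval x = ∑ i ∈ Finset.range (P.natDegree + 1), P.coeff i * x ^ i := by
      intro x; exact P.eval_eq_sum_range x
    simp_rw [this]
    rw [integral_finset_sum]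
    · exact Finset.sum_congr rfl fun i _ => by rw [integral_const_mul]
    · exact fun i _ => (integrable_pow_of_ae_Icc hρ i).const_mul _
  rw [key μ ‹_› hμ, key ν ‹_› hν]
  exact Finset.sum_congr rfl fun i _ => by rw [h i]

lemma integral_eq_of_moments (hμ : ∀ᵐ x ∂μ, x ∈ Set.Icc (0:ℝ) 1)
    (hν : ∀ᵐ x ∂ν, x ∈ Set.Icc (0:ℝ) 1)
    (h : ∀ n : ℕ, ∫ x, x ^ n ∂μ = ∫ x, x ^ n ∂ν)
    (f : ℝ → ℝ) (hf : Continuous f) (C : ℝ) (hC : ∀ x, |f x| ≤ C) :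
    ∫ x, f x ∂μ = ∫ x, f x ∂ν := by
  -- integrability
  have hint : ∀ (ρ : Measure ℝ) (_ : IsProbabilityMeasure ρ), Integrable f ρ := by
    intro ρ _
    exact Integrable.mono' (integrable_const C) hf.aestronglyMeasurable
      (Filter.Eventually.of_forall fun x => by rw [Real.norm_eq_abs]; exact hC x)
  have key : ∀ ε > (0:ℝ), |∫ x, f x ∂μ - ∫ x, f x ∂ν| ≤ 0 + ε := by
    intro ε hε
    -- Weierstrass approximation on Icc 0 1
    set s : Set ℝ := Set.Icc (0:ℝ) 1 with hs
    have : CompactSpace s := by rw [hs]; infer_instance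
    set g : C(s, ℝ) := (ContinuousMap.mk f hf).restrict s with hg
    have h2 : g ∈ (polynomialFunctions s).topologicalClosure := by
      rw [polynomialFunctions.topologicalClosure s]; trivial
    have hmem : g ∈ closure ((polynomialFunctions s : Set C(s, ℝ))) := by
      rwa [← Subalgebra.topologicalClosure_coe]
    rw [Metric.mem_closure_iff] at hmem
    obtain ⟨q, hq, hdq⟩ := hmem (ε/2) (by linarith)
    rw [polynomialFunctions_coe] at hq
    obtain ⟨P, rfl⟩ := hq
    -- pointwise bound on s
    have hbd : ∀ x ∈ s, |f x - P.eval x| ≤ ε/2 := by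
      intro x hx
      have := ContinuousMap.dist_apply_le_dist (f := g) (g := Polynomial.toContinuousMapOnAlgHom s P) ⟨x, hx⟩
      rw [Real.dist_eq] at this
      have hgx : g ⟨x, hx⟩ = f x := rfl
      have hqx : (Polynomial.toContinuousMapOnAlgHom s P) ⟨x, hx⟩ = P.eval x := rfl
      rw [hgx, hqx] at this
      exact this.trans hdq.le
    have hPint : ∀ (ρ : Measure ℝ) (_ : IsProbabilityMeasure ρ) (_ : ∀ᵐ x ∂ρ, x ∈ s),
        Integrable (fun x => P.eval x) ρ := by
      intro ρ _ hρ
      have : ∀ x : ℝ, P.eval x = ∑ i ∈ Finset.range (P.natDegree + 1), P.coeff i * x ^ i :=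
        fun x => P.eval_eq_sum_range x
      simp_rw [this]
      exact integrable_finset_sum _ fun i _ => (integrable_pow_of_ae_Icc hρ i).const_mul _
    -- integral bound
    have hib : ∀ (ρ : Measure ℝ) (_ : IsProbabilityMeasure ρ) (_ : ∀ᵐ x ∂ρ, x ∈ s),
        |∫ x, f x ∂ρ - ∫ x, P.eval x ∂ρ| ≤ ε/2 := by
      intro ρ _ hρ
      rw [← integral_sub (hint ρ ‹_›) (hPint ρ ‹_› hρ)]
      have := norm_integral_le_of_norm_le_const (μ := ρ)
        (f := fun x => f x - P.eval x) (C := ε/2) ?_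
      · simpa using this.trans (by simp)
      · filter_upwards [hρ] with x hx
        rw [Real.norm_eq_abs]
        exact hbd x hx
    have h1 := hib μ ‹_› hμ
    have h2 := hib ν ‹_› hν
    have h3 := integral_poly_eq hμ hν h P
    rw [zero_add]
    calc |∫ x, f x ∂μ - ∫ x, f x ∂ν|
        = |(∫ x, f x ∂μ - ∫ x, P.eval x ∂μ) - (∫ x, f x ∂ν - ∫ x, P.eval x ∂ν)| := by
          rw [h3]; ring_nf
      _ ≤ |∫ x, f x ∂μ - ∫ x, P.eval x ∂μ| + |∫ x, f x ∂ν - ∫ x, P.eval x ∂ν| := abs_sub _ _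
      _ ≤ ε/2 + ε/2 := add_le_add h1 h2
      _ = ε := by ring
  have h0 : |∫ x, f x ∂μ - ∫ x, f x ∂ν| ≤ 0 := le_of_forall_pos_le_add key
  have := abs_nonneg (∫ x, f x ∂μ - ∫ x, f x ∂ν)
  have : |∫ x, f x ∂μ - ∫ x, f x ∂ν| = 0 := le_antisymm h0 this
  linarith [abs_eq_zero.mp this, sub_eq_zero.mp (abs_eq_zero.mp this)]

lemma ext_of_moments_Icc (hμ : ∀ᵐ x ∂μ, x ∈ Set.Icc (0:ℝ) 1)
    (hν : ∀ᵐ x ∂ν, x ∈ Set.Icc (0:ℝ) 1)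
    (h : ∀ n : ℕ, ∫ x, x ^ n ∂μ = ∫ x, x ^ n ∂ν) : μ = ν := by
  apply ext_of_forall_lintegral_eq_of_IsFiniteMeasure
  intro f
  have h1 : (∫⁻ x, f x ∂μ) ≠ ⊤ := (BoundedContinuousFunction.lintegral_lt_top_of_nnreal μ f).ne
  have h2 : (∫⁻ x, f x ∂ν) ≠ ⊤ := (BoundedContinuousFunction.lintegral_lt_top_of_nnreal ν f).ne
  rw [← ENNReal.toReal_eq_toReal_iff' h1 h2,
    BoundedContinuousFunction.toReal_lintegral_coe_eq_integral f μ,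
    BoundedContinuousFunction.toReal_lintegral_coe_eq_integral f ν]
  refine integral_eq_of_moments hμ hν h (fun x => (f x : ℝ))
    (NNReal.continuous_coe.comp f.continuous) ((nndist f 0 : ℝ)) fun x => ?_
  rw [abs_of_nonneg (f x).coe_nonneg, NNReal.coe_le_coe]
  exact BoundedContinuousFunction.NNReal.upper_bound f x

end Uniq

variable {Ω : Type*} [MeasurableSpace Ω] {P : Measure Ω} [IsProbabilityMeasure P]


lemma integral_finset_prod_of_iIndepFun {k : ℕ} (V : Fin k → Ω → ℝ)
    (hmeas : ∀ j, Measurable (V j))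
    (hindep : iIndepFun V P)
    (hbdd : ∀ j, ∀ᵐ ω ∂P, V j ω ∈ Set.Icc (0:ℝ) 1) (s : Finset (Fin k)) :
    ∫ ω, ∏ j ∈ s, V j ω ∂P = ∏ j ∈ s, ∫ ω, V j ω ∂P := by
  have hint : ∀ s : Finset (Fin k), Integrable (fun ω => ∏ j ∈ s, V j ω) P := by
    intro s
    apply Integrable.mono' (integrable_const (1:ℝ))
    · exact (Finset.measurable_prod s fun j _ => hmeas j).aestronglyMeasurable
    · have : ∀ᵐ ω ∂P, ∀ j ∈ s, V j ω ∈ Set.Icc (0:ℝ) 1 :=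
        (ae_ball_iff s.countable_toSet).mpr fun j _ => hbdd j
      filter_upwards [this] with ω hω
      rw [Real.norm_eq_abs, abs_of_nonneg (Finset.prod_nonneg fun j hj => (hω j hj).1)]
      exact Finset.prod_le_one (fun j hj => (hω j hj).1) (fun j hj => (hω j hj).2)
  induction s using Finset.induction_on with
  | empty => simp
  | insert _ _ hi _ =>
    rename_i i s ih
    have hXY : IndepFun (fun ω => ∏ j ∈ s, V j ω) (V i) P := by
      have := hindep.indepFun_finsetProd_of_notMem hmeas hi
      convert this using 1
      funext ω
      simp [Finset.prod_apply]
    rw [Finset.prod_insert hi, ← ih]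
    have heq : (fun ω => ∏ j ∈ insert i s, V j ω) = fun ω => V i ω * ∏ j ∈ s, V j ω := by
      funext ω; rw [Finset.prod_insert hi]
    rw [heq]
    have hVi : Integrable (V i) P := by
      have := hint {i}
      apply this.congr
      filter_upwards with ω
      simp
    exact hXY.symm.integral_fun_mul_eq_mul_integral hVi.aestronglyMeasurable (hint s).aestronglyMeasurable

noncomputable def mom (p q : ℝ) (n : ℕ) : ℝ :=
  Real.Gamma (p + n) * Real.Gamma (p + q) / (Real.Gamma p * Real.Gamma (p + q + n))

lemma telescope (a δ : ℝ) (ha : 0 < a) (hδ : 0 < δ) (n : ℕ) (k : ℕ) :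
    ∏ j ∈ Finset.range k, mom (a + j * δ) δ n = mom a (k * δ) n := by
  induction k with
  | zero =>
    simp only [Finset.prod_range_zero, Nat.cast_zero, zero_mul, add_zero, mom]
    have h1 : Real.Gamma a ≠ 0 := (Real.Gamma_pos_of_pos ha).ne'
    have h2 : Real.Gamma (a + n) ≠ 0 := (Real.Gamma_pos_of_pos (by positivity)).ne'
    field_simp
  | succ k ih =>
    rw [Finset.prod_range_succ, ih, mom, mom, mom]
    have e1 : a + (k:ℝ) * δ + δ = a + ((k:ℕ)+1 : ℕ) * δ := by push_cast; ring
    have e2 : a + ((k:ℕ)+1 : ℕ) * δ + n = a + (k:ℝ) * δ + δ + n := by push_cast; ring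
    have p0 : (0:ℝ) < a + (k:ℝ) * δ := by positivity
    have g1 : Real.Gamma a ≠ 0 := (Real.Gamma_pos_of_pos ha).ne'
    have g2 : Real.Gamma (a + n) ≠ 0 := (Real.Gamma_pos_of_pos (by positivity)).ne'
    have g3 : Real.Gamma (a + (k:ℝ)*δ) ≠ 0 := (Real.Gamma_pos_of_pos p0).ne'
    have g4 : Real.Gamma (a + (k:ℝ)*δ + n) ≠ 0 := (Real.Gamma_pos_of_pos (by positivity)).ne'
    have g5 : Real.Gamma (a + (k:ℝ)*δ + δ) ≠ 0 := (Real.Gamma_pos_of_pos (by positivity)).ne'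
    have g6 : Real.Gamma (a + (k:ℝ)*δ + δ + n) ≠ 0 := (Real.Gamma_pos_of_pos (by positivity)).ne'
    rw [← e1]
    field_simp

end BetaAux

/-- If `U_1, …, U_k` (`k ≥ 2`) are independent with `U_j ~ Beta(a + (j-1)δ, δ)`, then
`U_1 ⋯ U_k ~ Beta(a, kδ)`. -/
theorem beta_prod {Ω : Type*} [MeasurableSpace Ω] (P : Measure Ω) [IsProbabilityMeasure P]
    (a δ : ℝ) (ha : 0 < a) (hδ : 0 < δ) (k : ℕ) (hk : 2 ≤ k)
    (U : Fin k → Ω → ℝ) (hUmeas : ∀ j, Measurable (U j))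
    (hindep : iIndepFun U P)
    (hdist : ∀ j : Fin k, P.map (U j) = _root_.betaMeasure (a + (j : ℝ) * δ) δ) :
    P.map (fun ω => ∏ j, U j ω) = _root_.betaMeasure a (k * δ) := by
  have hk0 : (0:ℝ) < (k:ℝ) := by
    have : 0 < k := lt_of_lt_of_le (by norm_num) hk
    exact_mod_cast this
  have hkδ : (0:ℝ) < (k:ℝ) * δ := by positivity
  have hprodmeas : Measurable (fun ω => ∏ j, U j ω) :=
    Finset.measurable_prod _ fun j _ => hUmeas j
  have hPM1 : IsProbabilityMeasure (P.map (fun ω => ∏ j, U j ω)) :=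
    Measure.isProbabilityMeasure_map hprodmeas.aemeasurable
  have hPM2 : IsProbabilityMeasure (_root_.betaMeasure a ((k:ℝ) * δ)) :=
    isProbabilityMeasure_betaMeasure ha hkδ
  have hUae : ∀ j, ∀ᵐ ω ∂P, U j ω ∈ Set.Ioo (0:ℝ) 1 := by
    intro j
    rw [ae_iff]
    have hset : {ω | ¬ U j ω ∈ Set.Ioo (0:ℝ) 1} = (U j) ⁻¹' (Set.Ioo (0:ℝ) 1)ᶜ := rfl
    rw [hset, ← Measure.map_apply (hUmeas j) measurableSet_Ioo.compl, hdist j,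
      betaMeasure_compl_Ioo]
  have hallae : ∀ᵐ ω ∂P, ∀ j, U j ω ∈ Set.Ioo (0:ℝ) 1 := ae_all_iff.mpr hUae
  have hprod_Icc : ∀ᵐ ω ∂P, (∏ j, U j ω) ∈ Set.Icc (0:ℝ) 1 := by
    filter_upwards [hallae] with ω hω
    exact ⟨Finset.prod_nonneg fun j _ => (hω j).1.le,
      Finset.prod_le_one (fun j _ => (hω j).1.le) (fun j _ => (hω j).2.le)⟩
  apply ext_of_moments_Icc
  · exact (MeasureTheory.ae_map_iff (p := fun x => x ∈ Set.Icc (0:ℝ) 1)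
      hprodmeas.aemeasurable measurableSet_Icc).mpr hprod_Icc
  · rw [ae_iff]
    apply measure_mono_null _ (betaMeasure_compl_Ioo a ((k:ℝ)*δ))
    intro x hx
    simp only [Set.mem_setOf_eq, Set.mem_Icc, not_and_or, not_le] at hx
    simp only [Set.mem_compl_iff, Set.mem_Ioo, not_and_or, not_lt]
    rcases hx with h | h
    · exact Or.inl h.le
    · exact Or.inr h.le
  · intro n
    rw [MeasureTheory.integral_map hprodmeas.aemeasurable
      (continuous_pow n).aestronglyMeasurable]
    have hexp : (fun ω => (∏ j, U j ω) ^ n) = fun ω => ∏ j, (U j ω) ^ n := by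
      funext ω; rw [Finset.prod_pow]
    rw [hexp]
    have hVmeas : ∀ j, Measurable (fun ω => (U j ω) ^ n) :=
      fun j => (hUmeas j).pow_const n
    have hVindep : iIndepFun (fun j ω => (U j ω) ^ n) P := by
      have := hindep.comp (fun _ (x : ℝ) => x ^ n) (fun _ => measurable_id.pow_const n)
      exact this
    have hVbdd : ∀ j, ∀ᵐ ω ∂P, (U j ω) ^ n ∈ Set.Icc (0:ℝ) 1 := by
      intro j
      filter_upwards [hUae j] with ω hω
      exact ⟨pow_nonneg hω.1.le n, pow_le_one₀ hω.1.le hω.2.le⟩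
    rw [integral_finset_prod_of_iIndepFun _ hVmeas hVindep hVbdd Finset.univ]
    have hmomj : ∀ j : Fin k, ∫ ω, (U j ω) ^ n ∂P = mom (a + (j:ℝ) * δ) δ n := by
      intro j
      have hjpos : (0:ℝ) < a + (j:ℝ) * δ := by positivity
      rw [← MeasureTheory.integral_map (hUmeas j).aemeasurable
        (continuous_pow n).aestronglyMeasurable, hdist j,
        moment_betaMeasure hjpos hδ n]
      rfl
    simp_rw [hmomj]
    rw [Fin.prod_univ_eq_prod_range (fun i : ℕ => mom (a + (i:ℝ) * δ) δ n) k,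
      telescope a δ ha hδ n k, moment_betaMeasure ha hkδ n]
    rfl
end
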